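/- 𝔰(pr) equals the least cardinality of a promptly splitting family, i.e., the least cardinality of a family F ⊆ (P(ℕ))^ω such that every infinite a ⊆ ℕ is promptly split by some member of F. -/

import Mathlib

open Filter Set Cardinal

/-- `P : ℕ → Set ℕ` is a partition of `ℕ` into pairwise disjoint pieces. -/
def PartitionOfNat (P : ℕ → Set ℕ) : Prop :=
  (∀ i j : ℕ, i ≠ j → Disjoint (P i) (P j)) ∧ (⋃ i, P i) = Set.univ

/-- A partition splits `a` if every piece meets `a` in an infinite set. -/
def PartSplits (P : ℕ → Set ℕ) (a : Set ℕ) : Prop := ∀ i : ℕ, (P i ∩ a).Infinite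

/-- `𝔰(pr)`: the least size of a splitting family of partitions of `ℕ`. -/
noncomputable def sPR : Cardinal :=
  sInf { κc : Cardinal | ∃ F : Set (ℕ → Set ℕ), #F = κc ∧ (∀ P ∈ F, PartitionOfNat P) ∧
    ∀ a : Set ℕ, a.Infinite → ∃ P ∈ F, PartSplits P a }

/-- `x⁰ = x` and `x¹ = ℕ \ x`, with `false` coding `0` and `true` coding `1`. -/
def SideOf (x : Set ℕ) (b : Bool) : Set ℕ := if b then xᶜ else x

/-- A sequence `X = ⟨x_i : i < ω⟩` of subsets of `ℕ` promptly splits an infinite `a ⊆ ℕ`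
if for every `n` and every `σ : {0,…,n} → 2`, `(⋂_{i ≤ n} x_i^{σ(i)}) ∩ a` is infinite. -/
def PromptlySplits (X : ℕ → Set ℕ) (a : Set ℕ) : Prop :=
  ∀ (n : ℕ) (σ : ℕ → Bool),
    ((⋂ i ∈ Finset.range (n + 1), SideOf (X i) (σ i)) ∩ a).Infinite

@[simp] lemma sideOf_false (x : Set ℕ) : SideOf x false = x := rfl
@[simp] lemma sideOf_true (x : Set ℕ) : SideOf x true = xᶜ := rfl

/-- encode the first `n+1` values of `σ` as the binary digits of a natural number -/
def code (σ : ℕ → Bool) : ℕ → ℕ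
  | 0 => (σ 0).toNat
  | n + 1 => 2 ^ (n + 1) * (σ (n + 1)).toNat + code σ n

lemma code_lt (σ : ℕ → Bool) (n : ℕ) : code σ n < 2 ^ (n + 1) := by
  induction n with
  | zero => cases hσ : σ 0 <;> simp [code, hσ]
  | succ n ih =>
    have h1 : (σ (n + 1)).toNat ≤ 1 := Bool.toNat_le _
    have h2 : 2 ^ (n + 1) * (σ (n + 1)).toNat ≤ 2 ^ (n + 1) := by
      calc 2 ^ (n + 1) * (σ (n + 1)).toNat ≤ 2 ^ (n + 1) * 1 :=
        Nat.mul_le_mul_left _ h1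
      _ = 2 ^ (n + 1) := by ring
    have : 2 ^ (n + 2) = 2 ^ (n + 1) + 2 ^ (n + 1) := by ring
    simp only [code]
    omega

lemma testBit_code {σ : ℕ → Bool} {n i : ℕ} (h : i ≤ n) :
    (code σ n).testBit i = σ i := by
  induction n with
  | zero =>
    interval_cases i
    cases hσ : σ 0 <;> simp [code, hσ]
  | succ n ih =>
    simp only [code]
    rw [Nat.testBit_two_pow_mul_add _ (code_lt σ n)]
    rcases Nat.lt_or_ge i (n + 1) with hi | hi
    · rw [if_pos hi]; exact ih (Nat.lt_succ_iff.mp hi)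
    · have : i = n + 1 := le_antisymm h hi
      subst this
      rw [if_neg (lt_irrefl _), Nat.sub_self]
      cases σ (n + 1) <;> simp

/-- every infinite set is promptly split by some sequence -/
lemma exists_prompt (a : Set ℕ) (ha : a.Infinite) :
    ∃ X : ℕ → Set ℕ, PromptlySplits X a := by
  let e := ha.natEmbedding
  refine ⟨fun i => {m | ∃ k, (e k : ℕ) = m ∧ Nat.testBit k i = true}, ?_⟩
  intro n σ
  have hval : Function.Injective (fun k : ℕ => (e k : ℕ)) :=
    Subtype.val_injective.comp e.injective
  obtain ⟨c, hkbit⟩ : ∃ c : ℕ, ∀ m : ℕ, ∀ i ≤ n,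
      Nat.testBit (2 ^ (n + 1) * m + c) i = !(σ i) := by
    refine ⟨code (fun j => !(σ j)) n, fun m i hi => ?_⟩
    rw [Nat.testBit_two_pow_mul_add _ (code_lt _ n), if_pos (Nat.lt_succ_of_le hi)]
    exact testBit_code hi
  apply Set.infinite_of_injective_forall_mem
    (f := fun m : ℕ => (e (2 ^ (n + 1) * m + c) : ℕ))
  case hi =>
    have haff : Function.Injective (fun m : ℕ => 2 ^ (n + 1) * m + c) := by
      intro m₁ m₂ hh
      have h2 : (0:ℕ) < 2 ^ (n + 1) := Nat.pow_pos (by norm_num)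
      simp only [] at hh
      exact Nat.eq_of_mul_eq_mul_left h2 (Nat.add_right_cancel hh)
    exact hval.comp haff
  case hf =>
    intro m
    refine ⟨?_, (e _).2⟩
    simp only [Set.mem_iInter, Finset.mem_range]
    intro i hi
    have hb := hkbit m i (Nat.lt_succ_iff.mp hi)
    cases hσ : σ i with
    | false =>
      simp only [sideOf_false]
      exact ⟨_, rfl, by rw [hb, hσ]; rfl⟩
    | true =>
      simp only [sideOf_true, Set.mem_compl_iff]
      rintro ⟨k, hk, hkb⟩
      have : k = 2 ^ (n + 1) * m + c := hval hk
      rw [this, hb, hσ] at hkb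
      simp at hkb

/-- from a partition produce a sequence for prompt splitting -/
def promptOf (P : ℕ → Set ℕ) (i : ℕ) : Set ℕ :=
  ⋃ j ∈ {j : ℕ | Nat.testBit j i = true}, P j

lemma promptOf_splits {P : ℕ → Set ℕ} {a : Set ℕ} (hP : PartitionOfNat P)
    (h : PartSplits P a) : PromptlySplits (promptOf P) a := by
  intro n σ
  set j₀ := code (fun i => !(σ i)) n with hj₀
  refine (h j₀).mono ?_
  rintro x ⟨hxP, hxa⟩
  refine ⟨?_, hxa⟩
  simp only [Set.mem_iInter, Finset.mem_range]
  intro i hi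
  have hb : Nat.testBit j₀ i = !(σ i) := testBit_code (Nat.lt_succ_iff.mp hi)
  cases hσ : σ i with
  | false =>
    simp only [sideOf_false, promptOf]
    exact Set.mem_biUnion (by rw [Set.mem_setOf_eq, hb, hσ]; rfl) hxP
  | true =>
    simp only [sideOf_true, Set.mem_compl_iff, promptOf, Set.mem_iUnion]
    rintro ⟨j, hj, hxj⟩
    simp only [Set.mem_setOf_eq] at hj
    have hne : j ≠ j₀ := by
      intro hjj; rw [hjj, hb, hσ] at hj; simp at hj
    exact (hP.1 j j₀ hne).le_bot ⟨hxj, hxP⟩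

/-- from a sequence produce a partition -/
def partOf (X : ℕ → Set ℕ) : ℕ → Set ℕ
  | 0 => (X 0)ᶜ ∪ ⋂ i, X i
  | j + 1 => (⋂ i ∈ Finset.range (j + 1), X i) ∩ (X (j + 1))ᶜ

lemma partOf_partition (X : ℕ → Set ℕ) : PartitionOfNat (partOf X) := by
  constructor
  · have key : ∀ i j : ℕ, i < j → Disjoint (partOf X i) (partOf X j) := by
      intro i j hij
      rw [Set.disjoint_left]
      intro x hxi hxj
      obtain ⟨k, rfl⟩ : ∃ k, j = k + 1 := ⟨j - 1, by omega⟩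
      obtain ⟨hxj1, hxj2⟩ := hxj
      simp only [Set.mem_iInter, Finset.mem_range] at hxj1
      cases i with
      | zero =>
        rcases hxi with hxi | hxi
        · exact hxi (hxj1 0 (by omega))
        · exact hxj2 (Set.mem_iInter.mp hxi (k + 1))
      | succ m =>
        exact hxi.2 (hxj1 (m + 1) (by omega))
    intro i j hij
    rcases lt_or_gt_of_ne hij with h | h
    · exact key i j h
    · exact (key j i h).symm
  · ext x
    simp only [Set.mem_iUnion, Set.mem_univ, iff_true]
    by_cases h : ∀ i, x ∈ X i
    · exact ⟨0, Or.inr (Set.mem_iInter.mpr h)⟩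
    · classical
      push_neg at h
      have hfind := Nat.find_spec h
      cases hn : Nat.find h with
      | zero => exact ⟨0, Or.inl (by rwa [hn] at hfind)⟩
      | succ k =>
        refine ⟨k + 1, ?_, by rwa [hn] at hfind⟩
        simp only [Set.mem_iInter, Finset.mem_range]
        intro i hi
        by_contra hxi
        have hle : Nat.find h ≤ i := Nat.find_le hxi
        omega

lemma partOf_splits {X : ℕ → Set ℕ} {a : Set ℕ} (h : PromptlySplits X a) :
    PartSplits (partOf X) a := by
  intro j
  cases j with
  | zero =>
    refine (h 0 (fun _ => true)).mono ?_
    rintro x ⟨hx, hxa⟩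
    simp only [Set.mem_iInter, Finset.mem_range] at hx
    exact ⟨Or.inl (hx 0 (by omega)), hxa⟩
  | succ k =>
    refine (h (k + 1) (fun i => decide (i = k + 1))).mono ?_
    rintro x ⟨hx, hxa⟩
    simp only [Set.mem_iInter, Finset.mem_range] at hx
    refine ⟨⟨?_, ?_⟩, hxa⟩
    · simp only [Set.mem_iInter, Finset.mem_range]
      intro i hi
      have := hx i (by omega)
      rw [decide_eq_false (by omega : ¬ i = k + 1)] at this
      exact this
    · have := hx (k + 1) (by omega)
      rw [decide_eq_true_eq.mpr rfl] at this
      exact this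

/-- `𝔰(pr)` equals the least cardinality of a promptly splitting family. -/
theorem stmt5 :
    sPR = sInf { κc : Cardinal | ∃ F : Set (ℕ → Set ℕ), #F = κc ∧
      ∀ a : Set ℕ, a.Infinite → ∃ X ∈ F, PromptlySplits X a } := by
  have hne2 : { κc : Cardinal | ∃ F : Set (ℕ → Set ℕ), #F = κc ∧
      ∀ a : Set ℕ, a.Infinite → ∃ X ∈ F, PromptlySplits X a }.Nonempty := by
    refine ⟨#(Set.univ : Set (ℕ → Set ℕ)), Set.univ, rfl, fun a ha => ?_⟩
    obtain ⟨X, hX⟩ := exists_prompt a ha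
    exact ⟨X, Set.mem_univ X, hX⟩
  have hne1 : { κc : Cardinal | ∃ F : Set (ℕ → Set ℕ), #F = κc ∧
      (∀ P ∈ F, PartitionOfNat P) ∧
      ∀ a : Set ℕ, a.Infinite → ∃ P ∈ F, PartSplits P a }.Nonempty := by
    refine ⟨#(Set.range partOf : Set (ℕ → Set ℕ)), Set.range partOf, rfl, ?_, fun a ha => ?_⟩
    · rintro P ⟨X, rfl⟩; exact partOf_partition X
    · obtain ⟨X, hX⟩ := exists_prompt a ha
      exact ⟨partOf X, ⟨X, rfl⟩, partOf_splits hX⟩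
  unfold sPR
  apply le_antisymm
  · refine le_csInf hne2 ?_
    rintro κ ⟨F, hF, hsp⟩
    have hmem : #(partOf '' F : Set (ℕ → Set ℕ)) ∈ { κc : Cardinal |
        ∃ F : Set (ℕ → Set ℕ), #F = κc ∧ (∀ P ∈ F, PartitionOfNat P) ∧
        ∀ a : Set ℕ, a.Infinite → ∃ P ∈ F, PartSplits P a } := by
      refine ⟨partOf '' F, rfl, ?_, fun a ha => ?_⟩
      · rintro P ⟨X, _, rfl⟩; exact partOf_partition X
      · obtain ⟨X, hXF, hX⟩ := hsp a ha
        exact ⟨partOf X, ⟨X, hXF, rfl⟩, partOf_splits hX⟩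
    calc sInf _ ≤ #(partOf '' F : Set (ℕ → Set ℕ)) := csInf_le (OrderBot.bddBelow _) hmem
      _ ≤ #F := Cardinal.mk_image_le
      _ = κ := hF
  · refine le_csInf hne1 ?_
    rintro κ ⟨F, hF, hpart, hsp⟩
    have hmem : #(promptOf '' F : Set (ℕ → Set ℕ)) ∈ { κc : Cardinal |
        ∃ F : Set (ℕ → Set ℕ), #F = κc ∧
        ∀ a : Set ℕ, a.Infinite → ∃ X ∈ F, PromptlySplits X a } := by
      refine ⟨promptOf '' F, rfl, fun a ha => ?_⟩
      obtain ⟨P, hPF, hP⟩ := hsp a ha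
      exact ⟨promptOf P, ⟨P, hPF, rfl⟩, promptOf_splits (hpart P hPF) hP⟩
    calc sInf _ ≤ #(promptOf '' F : Set (ℕ → Set ℕ)) := csInf_le (OrderBot.bddBelow _) hmem
      _ ≤ #F := Cardinal.mk_image_le
      _ = κ := hF
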